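/- Let G be an abelian group and S a finite sequence over G. If k ∈ [2, |S|−2], |Σ_k(S)| ≤ 2, and Σ_k(S) is not a coset of a subgroup of order 2, then either S = g^{|S|} or S = g^{|S|−1} h for some g, h ∈ G. -/

import Mathlib

/-- The set of sums of `k`-term subsequences of `S`. -/
def subsums {G : Type*} [AddCommGroup G] (S : Multiset G) (k : ℕ) : Set G :=
  {x | ∃ T ≤ S, Multiset.card T = k ∧ T.sum = x}

lemma ml_exists_le_card {α : Type*} (s : Multiset α) (m : ℕ) (h : m ≤ Multiset.card s) :
    ∃ t ≤ s, Multiset.card t = m := by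
  refine ⟨(s.toList.take m : List α), ?_, ?_⟩
  · have h1 : ((s.toList.take m : List α) : Multiset α) ≤ (s.toList : Multiset α) :=
      (List.take_sublist m s.toList).subperm
    rwa [Multiset.coe_toList] at h1
  · have := Multiset.length_toList s
    simp only [Multiset.coe_card, List.length_take]
    omega

lemma subsums_finite {G : Type*} [AddCommGroup G] (S : Multiset G) (k : ℕ) :
    (subsums S k).Finite := by
  classical
  apply Set.Finite.subset (Multiset.toFinset ((S.powersetCard k).map Multiset.sum)).finite_toSet
  rintro x ⟨T, hT, hc, rfl⟩
  simp only [Finset.mem_coe, Multiset.mem_toFinset, Multiset.mem_map]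
  exact ⟨T, Multiset.mem_powersetCard.2 ⟨hT, hc⟩, rfl⟩

lemma collide {G : Type*} [AddCommGroup G] {A : Set G} (hA : A.Finite) (h : A.ncard ≤ 2)
    {x y z : G} (hx : x ∈ A) (hy : y ∈ A) (hz : z ∈ A) (hxy : x ≠ y) : z = x ∨ z = y := by
  by_contra h'
  push_neg at h'
  have hsub : ({z, x, y} : Set G) ⊆ A := by
    rintro w (rfl | rfl | rfl) <;> assumption
  have h3 : ({z, x, y} : Set G).ncard = 3 := by
    rw [Set.ncard_insert_of_notMem (by simp [h'.1, h'.2]), Set.ncard_pair hxy]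
  have := Set.ncard_le_ncard hsub hA
  omega

lemma three_distinct {G : Type*} [AddCommGroup G] {S : Multiset G} {k : ℕ} {a b c : G}
    (ha : a ∈ S) (hb : b ∈ S) (hc : c ∈ S) (hab : a ≠ b) (hac : a ≠ c) (hbc : b ≠ c)
    (hk1 : 1 ≤ k) (hk2 : k + 2 ≤ Multiset.card S) :
    ¬ (subsums S k).ncard ≤ 2 := by
  classical
  intro hsub
  have hcb : c ∈ S.erase b := (Multiset.mem_erase_of_ne hbc.symm).2 hc
  set S' := (S.erase b).erase c with hS'
  have haS' : a ∈ S' :=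
    (Multiset.mem_erase_of_ne hac).2 ((Multiset.mem_erase_of_ne hab).2 ha)
  have hcardS' : k - 1 ≤ Multiset.card (S'.erase a) := by
    rw [Multiset.card_erase_of_mem haS', hS', Multiset.card_erase_of_mem hcb,
      Multiset.card_erase_of_mem hb]
    simp only [Nat.pred_eq_sub_one]
    omega
  obtain ⟨T', hT'le, hT'card⟩ := ml_exists_le_card (S'.erase a) (k - 1) hcardS'
  have hS'S : S' ≤ S := le_trans (Multiset.erase_le _ _) (Multiset.erase_le _ _)
  have hTa : (a ::ₘ T') ≤ S := by
    calc a ::ₘ T' ≤ a ::ₘ S'.erase a := Multiset.cons_le_cons a hT'le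
    _ = S' := Multiset.cons_erase haS'
    _ ≤ S := hS'S
  have hT'b : T' ≤ S.erase b :=
    le_trans hT'le (le_trans (Multiset.erase_le a S') (Multiset.erase_le c (S.erase b)))
  have hTb : (b ::ₘ T') ≤ S := by
    calc b ::ₘ T' ≤ b ::ₘ S.erase b := Multiset.cons_le_cons b hT'b
    _ = S := Multiset.cons_erase hb
  have hT'c : T' ≤ S.erase c := by
    have hcomm : S' = (S.erase c).erase b := Multiset.erase_comm S b c
    exact le_trans hT'le (le_trans (Multiset.erase_le a S')
      (hcomm ▸ Multiset.erase_le b (S.erase c)))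
  have hTc : (c ::ₘ T') ≤ S := by
    calc c ::ₘ T' ≤ c ::ₘ S.erase c := Multiset.cons_le_cons c hT'c
    _ = S := Multiset.cons_erase hc
  have hmem : ∀ x : G, (x ::ₘ T') ≤ S → x + T'.sum ∈ subsums S k := by
    intro x h
    exact ⟨x ::ₘ T', h, by rw [Multiset.card_cons, hT'card]; omega, by simp⟩
  have h1 := hmem a hTa
  have h2 := hmem b hTb
  have h3 := hmem c hTc
  have hne1 : a + T'.sum ≠ b + T'.sum := fun h => hab (add_right_cancel h)
  rcases collide (subsums_finite S k) hsub h1 h2 h3 hne1 with h | h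
  · exact hac (add_right_cancel h.symm)
  · exact hbc (add_right_cancel h.symm)

lemma two_vals {G : Type*} [AddCommGroup G] {S : Multiset G} {a b : G} {p q k : ℕ}
    (hS : S = Multiset.replicate p a + Multiset.replicate q b) (hab : a ≠ b)
    (hp : 2 ≤ p) (hq : 2 ≤ q) (hk1 : 2 ≤ k) (hk2 : k + 2 ≤ p + q)
    (hsub : (subsums S k).ncard ≤ 2) :
    ∃ (H : AddSubgroup G) (x : G), Nat.card H = 2 ∧
      subsums S k = (fun h => x + h) '' (H : Set G) := by
  classical
  set d := b - a with hd_def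
  have hd : d ≠ 0 := sub_ne_zero.2 (Ne.symm hab)
  have hadb : a + d = b := by simp [hd_def]
  have hmemT : ∀ i j : ℕ, i ≤ p → j ≤ q → i + j = k → i • a + j • b ∈ subsums S k := by
    intro i j hi hj hij
    refine ⟨Multiset.replicate i a + Multiset.replicate j b, ?_, by simp [hij], by
      simp [Multiset.sum_replicate]⟩
    rw [hS]
    exact add_le_add ((Multiset.replicate_le_replicate a).2 hi)
      ((Multiset.replicate_le_replicate b).2 hj)
  set u := min k p with hu_def
  have hu2 : 2 ≤ u := by omega
  have hkuq : k - u + 2 ≤ q := by omega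
  obtain ⟨v, hv⟩ : ∃ v, u = v + 2 := ⟨u - 2, by omega⟩
  set w := k - u with hw_def
  have hkey : ∀ m i : ℕ, m + i = k → m • a + i • b = k • a + i • d := by
    intro m i hmi
    have hb' : i • b = i • a + i • d := by rw [← smul_add, hadb]
    rw [hb', ← add_assoc, ← add_nsmul, hmi]
  have hm0 : k • a + w • d ∈ subsums S k := by
    rw [← hkey (v + 2) w (by omega)]
    exact hmemT _ _ (by omega) (by omega) (by omega)
  have hm1 : k • a + (w + 1) • d ∈ subsums S k := by
    rw [← hkey (v + 1) (w + 1) (by omega)]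
    exact hmemT _ _ (by omega) (by omega) (by omega)
  have hm2 : k • a + (w + 2) • d ∈ subsums S k := by
    rw [← hkey v (w + 2) (by omega)]
    exact hmemT _ _ (by omega) (by omega) (by omega)
  have hs1 : k • a + (w + 1) • d = (k • a + w • d) + d := by
    rw [succ_nsmul, add_assoc]
  have hs2 : k • a + (w + 2) • d = ((k • a + w • d) + d) + d := by
    have : (w + 2) • d = w • d + d + d := by rw [add_nsmul, two_nsmul, ← add_assoc]
    rw [this]; abel
  have hne01 : k • a + w • d ≠ k • a + (w + 1) • d := by
    rw [hs1]
    intro h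
    exact hd (left_eq_add.1 h)
  have hdd : d + d = 0 := by
    rcases collide (subsums_finite S k) hsub hm0 hm1 hm2 hne01 with h | h
    · rw [hs2] at h
      have h' : (k • a + w • d) + (d + d) = (k • a + w • d) + 0 := by
        rw [← add_assoc, add_zero]; exact h
      exact add_left_cancel h'
    · rw [hs2, hs1] at h
      exact absurd (left_eq_add.1 h.symm) hd
  -- parity of nsmul of d
  have hpar : ∀ i : ℕ, i • d = 0 ∨ i • d = d := by
    intro i
    rcases Nat.even_or_odd i with ⟨m, rfl⟩ | ⟨m, rfl⟩
    · left; rw [add_nsmul, ← smul_add, hdd, smul_zero]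
    · right
      rw [add_nsmul, one_nsmul, two_mul, add_nsmul, ← smul_add, hdd, smul_zero, zero_add]
  -- characterize subsums
  have hsubset : subsums S k = {k • a, k • a + d} := by
    ext x
    constructor
    · rintro ⟨T, hT, hcard, rfl⟩
      have hcount : ∀ y, T.count y ≤ S.count y := fun y => Multiset.le_iff_count.1 hT y
      have hTeq : T = Multiset.replicate (T.count a) a + Multiset.replicate (T.count b) b := by
        ext y
        rw [Multiset.count_add, Multiset.count_replicate, Multiset.count_replicate]
        split_ifs with h1 h2 h2
        · exact absurd (h1.trans h2.symm) hab
        · subst h1; simp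
        · subst h2; simp
        · have := hcount y
          rw [hS, Multiset.count_add, Multiset.count_replicate, Multiset.count_replicate,
            if_neg h1, if_neg h2] at this
          omega
      have hck : T.count a + T.count b = k := by
        have := hcard
        rw [hTeq] at this
        simpa using this
      have hsum : T.sum = T.count a • a + T.count b • b := by
        conv_lhs => rw [hTeq]
        simp [Multiset.sum_replicate]
      rw [hsum, hkey _ _ hck]
      rcases hpar (T.count b) with h | h <;> rw [h] <;> simp
    · have hw0 : k • a ∈ subsums S k ∧ k • a + d ∈ subsums S k := by
        rcases hpar w with h | h
        · rw [h, add_zero] at hm0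
          exact ⟨hm0, by rwa [hs1, h, add_zero] at hm1⟩
        · rw [h] at hm0
          have h1 : k • a + (w + 1) • d = k • a := by
            rw [hs1, h, add_assoc, hdd, add_zero]
          rw [h1] at hm1
          exact ⟨hm1, hm0⟩
      rintro (rfl | rfl)
      · exact hw0.1
      · exact hw0.2
  refine ⟨AddSubgroup.zmultiples d, k • a, ?_, ?_⟩
  · rw [Nat.card_zmultiples]
    have h1 : addOrderOf d ∣ 2 := addOrderOf_dvd_of_nsmul_eq_zero (by rw [two_nsmul]; exact hdd)
    rcases (Nat.dvd_prime Nat.prime_two).1 h1 with h | h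
    · exact absurd (AddMonoid.addOrderOf_eq_one_iff.1 h) hd
    · exact h
  · have hsetH : (AddSubgroup.zmultiples d : Set G) = {0, d} := by
      ext y
      constructor
      · intro hy
        obtain ⟨j, rfl⟩ := AddSubgroup.mem_zmultiples_iff.1 hy
        rcases Int.even_or_odd j with ⟨m, rfl⟩ | ⟨m, rfl⟩
        · left
          show _ = (0 : G)
          rw [add_zsmul, ← smul_add, hdd, smul_zero]
        · right
          show _ = d
          rw [add_zsmul, one_zsmul, two_mul, add_zsmul, ← smul_add, hdd, smul_zero, zero_add]
      · rintro (rfl | rfl)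
        · exact zero_mem _
        · exact AddSubgroup.mem_zmultiples d
    rw [hsetH, hsubset, Set.image_pair]
    simp

theorem stmt_4 {G : Type*} [AddCommGroup G]
    (S : Multiset G) (k : ℕ) (hk1 : 2 ≤ k) (hk2 : k ≤ Multiset.card S - 2)
    (hsub : (subsums S k).ncard ≤ 2)
    (hcoset : ¬ ∃ (H : AddSubgroup G) (x : G), Nat.card H = 2 ∧
      subsums S k = (fun h => x + h) '' (H : Set G)) :
    ∃ g h : G, S = Multiset.replicate (Multiset.card S) g ∨
      S = Multiset.replicate (Multiset.card S - 1) g + {h} := by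
  classical
  set n := Multiset.card S with hn_def
  have hn4 : 4 ≤ n := by omega
  have hk2' : k + 2 ≤ n := by omega
  have hF1 : 1 ≤ S.toFinset.card := by
    have : S ≠ 0 := by
      intro h
      rw [h] at hn_def
      simp at hn_def
      omega
    obtain ⟨x, hx⟩ := Multiset.exists_mem_of_ne_zero this
    exact Finset.card_pos.2 ⟨x, Multiset.mem_toFinset.2 hx⟩
  rcases Nat.lt_or_ge S.toFinset.card 3 with hlt | hge
  · interval_cases h : S.toFinset.card
    · -- card 1 : constant
      obtain ⟨g, hg⟩ := Finset.card_eq_one.1 h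
      refine ⟨g, g, Or.inl ?_⟩
      rw [Multiset.eq_replicate]
      refine ⟨rfl, fun y hy => ?_⟩
      have := Multiset.mem_toFinset.2 hy
      rw [hg] at this
      simpa using this
    · -- card 2
      obtain ⟨a, b, hab, hFab⟩ := Finset.card_eq_two.1 h
      have ha : a ∈ S := Multiset.mem_toFinset.1 (by rw [hFab]; simp)
      have hb : b ∈ S := Multiset.mem_toFinset.1 (by rw [hFab]; simp)
      set p := S.count a with hp_def
      set q := S.count b with hq_def
      have hSrep : S = Multiset.replicate p a + Multiset.replicate q b := by
        ext y
        rw [Multiset.count_add, Multiset.count_replicate, Multiset.count_replicate]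
        split_ifs with h1 h2 h2
        · exact absurd (h1.trans h2.symm) hab
        · subst h1; simp [hp_def, hq_def]
        · subst h2; simp [hp_def, hq_def]
        · rw [Multiset.count_eq_zero]
          intro hy
          have := Multiset.mem_toFinset.2 hy
          rw [hFab] at this
          simp only [Finset.mem_insert, Finset.mem_singleton] at this
          rcases this with h | h
          · exact h1 h.symm
          · exact h2 h.symm
      have hpq : p + q = n := by
        rw [hn_def]
        conv_rhs => rw [hSrep]
        simp
      have hp1 : 1 ≤ p := Multiset.count_pos.2 ha
      have hq1 : 1 ≤ q := Multiset.count_pos.2 hb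
      by_cases hpe : p = 1
      · refine ⟨b, a, Or.inr ?_⟩
        rw [hSrep, hpe]
        have : n - 1 = q := by omega
        rw [this, Multiset.replicate_one, add_comm]
      · by_cases hqe : q = 1
        · refine ⟨a, b, Or.inr ?_⟩
          rw [hSrep, hqe]
          have : n - 1 = p := by omega
          rw [this, Multiset.replicate_one]
        · exact absurd (two_vals hSrep hab (by omega) (by omega) hk1 (by omega) hsub) hcoset
  · -- ≥ 3 distinct values : contradiction
    obtain ⟨a, b, c, ha, hb, hc, hab, hac, hbc⟩ := Finset.two_lt_card_iff.1 (show 2 < S.toFinset.card by omega)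
    exact absurd hsub (three_distinct (Multiset.mem_toFinset.1 ha) (Multiset.mem_toFinset.1 hb)
      (Multiset.mem_toFinset.1 hc) hab hac hbc (by omega) hk2')
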